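/- Let X be σ-sub-Gaussian and S the average of n independent copies of X. Then for every λ ∈ [0,1), E[exp(nλ(S − E X)²/(2σ²))] ≤ 1/√(1−λ). -/

import Mathlib

open MeasureTheory ProbabilityTheory Real Finset

/-- Gaussian linear-quadratic exponential is integrable. -/
lemma integrable_exp_lin_quad (a : ℝ) :
    Integrable (fun t : ℝ => Real.exp (a * t - t ^ 2 / 2)) := by
  have h : ∀ t : ℝ, a * t - t ^ 2 / 2 = a ^ 2 / 2 + (-(1 / 2) * (t - a) ^ 2) := fun t => by ring
  simp_rw [h, Real.exp_add]
  exact ((integrable_exp_neg_mul_sq (by norm_num : (0:ℝ) < 1/2)).comp_sub_right a).const_mul _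

/-- Complete-the-square Gaussian integral. -/
lemma gauss_mgf_integral (a : ℝ) :
    ∫ t : ℝ, Real.exp (a * t - t ^ 2 / 2)
      = Real.sqrt (2 * Real.pi) * Real.exp (a ^ 2 / 2) := by
  have h : ∀ t : ℝ, a * t - t ^ 2 / 2 = a ^ 2 / 2 + (-(1 / 2) * (t - a) ^ 2) := fun t => by ring
  simp_rw [h, Real.exp_add]
  rw [MeasureTheory.integral_const_mul,
    integral_sub_right_eq_self (fun t : ℝ => Real.exp (-(1 / 2) * t ^ 2)) a,
    integral_gaussian]
  rw [mul_comm]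
  congr 2
  ring

/-- Product of lintegrals for independent random variables. -/
lemma lintegral_prod_of_iIndepFun {Ω : Type*} [MeasurableSpace Ω] {μ : Measure Ω}
    [IsProbabilityMeasure μ] {ι : Type*} (G : ι → Ω → ENNReal)
    (hGmeas : ∀ i, Measurable (G i))
    (hGindep : iIndepFun G μ) (s : Finset ι) :
    ∫⁻ ω, ∏ i ∈ s, G i ω ∂μ = ∏ i ∈ s, ∫⁻ ω, G i ω ∂μ := by
  classical
  induction s using Finset.induction_on with
  | empty => simp
  | @insert i s hi ih =>
    have hfun : (∏ j ∈ s, G j) = fun ω => ∏ j ∈ s, G j ω := by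
      funext ω; exact Finset.prod_apply ω s G
    have hindep' : IndepFun (G i) (fun ω => ∏ j ∈ s, G j ω) μ := by
      rw [← hfun]
      exact (hGindep.indepFun_finsetProd_of_notMem hGmeas hi).symm
    have hmeas' : Measurable (fun ω => ∏ j ∈ s, G j ω) :=
      Finset.measurable_prod s fun j _ => hGmeas j
    simp_rw [Finset.prod_insert hi]
    rw [lintegral_mul_eq_lintegral_mul_lintegral_of_indepFun'' (hGmeas i).aemeasurable
      hmeas'.aemeasurable hindep', ih]

/-- **Moment-generating-function bound for the square of a sub-Gaussian sample average.**
If `X` is `σ`-sub-Gaussian and `S` is the average of `n` independent copies of `X`, then for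
every `λ ∈ [0,1)`, `E[exp(nλ(S − E X)²/(2σ²))] ≤ 1/√(1−λ)`. -/
theorem subGaussian_square_mgf_bound {Ω : Type*} [MeasurableSpace Ω]
    (μ : Measure Ω) [IsProbabilityMeasure μ]
    (n : ℕ) (hn : 0 < n) (X : Fin n → Ω → ℝ)
    (hmeas : ∀ i, Measurable (X i))
    (hindep : iIndepFun X μ)
    (hident : ∀ i j, Measure.map (X i) μ = Measure.map (X j) μ)
    (σ : ℝ) (hσ : 0 < σ)
    (m : ℝ) (hmean : ∀ i, ∫ ω, X i ω ∂μ = m)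
    (hsub : ∀ i, ∀ t : ℝ,
      ∫ ω, Real.exp (t * (X i ω - m)) ∂μ ≤ Real.exp (t ^ 2 * σ ^ 2 / 2))
    (lam : ℝ) (hlam : lam ∈ Set.Ico (0 : ℝ) 1) :
    ∫ ω, Real.exp (n * lam * ((∑ i, X i ω) / n - m) ^ 2 / (2 * σ ^ 2)) ∂μ
      ≤ 1 / Real.sqrt (1 - lam) := by
  obtain ⟨hlam0, hlam1⟩ := hlam
  have h1l : (0:ℝ) < 1 - lam := by linarith
  have hRHSpos : (0:ℝ) < 1 / Real.sqrt (1 - lam) := by positivity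
  rcases eq_or_lt_of_le hlam0 with h0 | hlamp
  · simp only [← h0, mul_zero, zero_mul, zero_div, Real.exp_zero, sub_zero, Real.sqrt_one,
      div_one, integral_const, measure_univ, ENNReal.toReal_one, probReal_univ, smul_eq_mul, mul_one, le_refl]
  -- main case : 0 < lam
  have hn' : (0:ℝ) < n := by exact_mod_cast hn
  have hnne : (n:ℝ) ≠ 0 := ne_of_gt hn'
  set Z : Ω → ℝ := fun ω => (∑ i, X i ω) / n - m with hZ
  have hZmeas : Measurable Z := by
    apply Measurable.sub_const
    exact (Finset.measurable_sum Finset.univ fun i _ => hmeas i).div_const _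
  set c : ℝ := n * lam / (2 * σ ^ 2) with hc
  have hcpos : 0 < c := by
    apply div_pos (mul_pos hn' hlamp); positivity
  have hgc : ∀ z : ℝ, n * lam * z ^ 2 / (2 * σ ^ 2) = c * z ^ 2 := fun z => by
    rw [hc]; ring
  set L : ENNReal := ∫⁻ ω, ENNReal.ofReal (Real.exp (c * Z ω ^ 2)) ∂μ with hL
  -- the Bochner integral equals L.toReal
  have hEq : ∫ ω, Real.exp (n * lam * ((∑ i, X i ω) / n - m) ^ 2 / (2 * σ ^ 2)) ∂μ
      = L.toReal := by
    rw [integral_eq_lintegral_of_nonneg_ae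
      (Filter.Eventually.of_forall fun ω => (Real.exp_pos _).le)
      ((((hZmeas.pow_const 2).const_mul (n * lam)).div_const (2 * σ ^ 2)).exp.aestronglyMeasurable)]
    congr 1
    refine lintegral_congr fun ω => ?_
    rw [hgc]
  -- product formula via independence
  have hprod : ∀ a : ℝ, ∫⁻ ω, ENNReal.ofReal (Real.exp (a * Z ω)) ∂μ
      = ∏ i, ∫⁻ ω, ENNReal.ofReal (Real.exp ((a / n) * (X i ω - m))) ∂μ := by
    intro a
    have hGmeas : ∀ i, Measurable
        (fun ω => ENNReal.ofReal (Real.exp ((a / n) * (X i ω - m)))) := fun i =>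
      ((((hmeas i).sub_const m).const_mul (a / n)).exp).ennreal_ofReal
    have hGindep : iIndepFun
        (fun i ω => ENNReal.ofReal (Real.exp ((a / n) * (X i ω - m)))) μ := by
      have := hindep.comp (fun i x => ENNReal.ofReal (Real.exp ((a / n) * (x - m))))
        (fun i => (((measurable_id.sub_const m).const_mul (a / n)).exp).ennreal_ofReal)
      exact this
    have hpoint : ∀ ω, ENNReal.ofReal (Real.exp (a * Z ω))
        = ∏ i, ENNReal.ofReal (Real.exp ((a / n) * (X i ω - m))) := by
      intro ω
      have hsum : a * Z ω = ∑ i, (a / n) * (X i ω - m) := by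
        rw [← Finset.mul_sum, Finset.sum_sub_distrib, Finset.sum_const, card_univ,
          Fintype.card_fin, nsmul_eq_mul, hZ]
        field_simp
      rw [hsum, Real.exp_sum, ENNReal.ofReal_prod_of_nonneg (fun i _ => (Real.exp_pos _).le)]
    simp_rw [hpoint]
    exact lintegral_prod_of_iIndepFun _ hGmeas hGindep Finset.univ
  -- now the main bound; first handle L = ⊤
  rw [hEq]
  by_cases hLtop : L = ⊤
  · rw [hLtop]; simpa using hRHSpos.le
  have hLlt : L < ⊤ := lt_top_iff_ne_top.mpr hLtop
  -- key mgf bound in the lintegral world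
  have hH : ∀ a : ℝ, ∫⁻ ω, ENNReal.ofReal (Real.exp (a * Z ω)) ∂μ
      ≤ ENNReal.ofReal (Real.exp (a ^ 2 * σ ^ 2 / (2 * n))) := by
    intro a
    have hfin : ∫⁻ ω, ENNReal.ofReal (Real.exp (a * Z ω)) ∂μ < ⊤ := by
      have hbd : ∀ ω, ENNReal.ofReal (Real.exp (a * Z ω))
          ≤ ENNReal.ofReal (Real.exp (a ^ 2 / (4 * c))) *
            ENNReal.ofReal (Real.exp (c * Z ω ^ 2)) := by
        intro ω
        rw [← ENNReal.ofReal_mul (Real.exp_pos _).le, ← Real.exp_add]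
        apply ENNReal.ofReal_le_ofReal
        apply Real.exp_le_exp.mpr
        have key : a ^ 2 / (4 * c) + c * Z ω ^ 2 - a * Z ω
            = (2 * c * Z ω - a) ^ 2 / (4 * c) := by
          field_simp
          ring
        have hnn : (0:ℝ) ≤ (2 * c * Z ω - a) ^ 2 / (4 * c) :=
          div_nonneg (sq_nonneg _) (by positivity)
        linarith [key, hnn]
      calc ∫⁻ ω, ENNReal.ofReal (Real.exp (a * Z ω)) ∂μ
          ≤ ∫⁻ ω, ENNReal.ofReal (Real.exp (a ^ 2 / (4 * c))) *
              ENNReal.ofReal (Real.exp (c * Z ω ^ 2)) ∂μ := lintegral_mono hbd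
        _ = ENNReal.ofReal (Real.exp (a ^ 2 / (4 * c))) * L := by
            rw [lintegral_const_mul' _ _ ENNReal.ofReal_ne_top, hL]
        _ < ⊤ := ENNReal.mul_lt_top ENNReal.ofReal_lt_top hLlt
    have hposfac : ∀ i : Fin n,
        (∫⁻ ω, ENNReal.ofReal (Real.exp ((a / n) * (X i ω - m))) ∂μ) ≠ 0 := by
      intro i
      have hsupp : Function.support
          (fun ω => ENNReal.ofReal (Real.exp ((a / n) * (X i ω - m)))) = Set.univ := by
        apply Set.eq_univ_of_forall
        intro ω
        exact (ENNReal.ofReal_pos.mpr (Real.exp_pos _)).ne'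
      have := (lintegral_pos_iff_support (μ := μ)
        ((((hmeas i).sub_const m).const_mul (a / n)).exp).ennreal_ofReal).mpr
        (by rw [hsupp, measure_univ]; exact one_pos)
      exact this.ne'
    have hfac : ∀ i : Fin n, ∫⁻ ω, ENNReal.ofReal (Real.exp ((a / n) * (X i ω - m))) ∂μ
        ≤ ENNReal.ofReal (Real.exp ((a / n) ^ 2 * σ ^ 2 / 2)) := by
      intro i
      by_cases hint : Integrable (fun ω => Real.exp ((a / n) * (X i ω - m))) μ
      · rw [← ofReal_integral_eq_lintegral_ofReal hint
          (Filter.Eventually.of_forall fun ω => (Real.exp_pos _).le)]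
        exact ENNReal.ofReal_le_ofReal (hsub i (a / n))
      · exfalso
        have htop : ∫⁻ ω, ENNReal.ofReal (Real.exp ((a / n) * (X i ω - m))) ∂μ = ⊤ := by
          by_contra h
          apply hint
          refine ⟨((((hmeas i).sub_const m).const_mul (a / n)).exp).aestronglyMeasurable, ?_⟩
          rw [hasFiniteIntegral_iff_ofReal
            (Filter.Eventually.of_forall fun ω => (Real.exp_pos _).le)]
          exact lt_top_iff_ne_top.mpr h
        rw [hprod a] at hfin
        have hprodtop : (∏ i : Fin n,
            ∫⁻ ω, ENNReal.ofReal (Real.exp ((a / n) * (X i ω - m))) ∂μ) = ⊤ := by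
          rw [← Finset.prod_erase_mul Finset.univ _ (Finset.mem_univ i), htop,
            ENNReal.mul_top]
          exact Finset.prod_ne_zero_iff.mpr fun j _ => hposfac j
        rw [hprodtop] at hfin
        exact lt_irrefl _ hfin
    rw [hprod a]
    calc (∏ i : Fin n, ∫⁻ ω, ENNReal.ofReal (Real.exp ((a / n) * (X i ω - m))) ∂μ)
        ≤ ∏ _i : Fin n, ENNReal.ofReal (Real.exp ((a / n) ^ 2 * σ ^ 2 / 2)) :=
          Finset.prod_le_prod' fun i _ => hfac i
      _ = ENNReal.ofReal (Real.exp ((a / n) ^ 2 * σ ^ 2 / 2)) ^ n := by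
          rw [Finset.prod_const, card_univ, Fintype.card_fin]
      _ = ENNReal.ofReal (Real.exp ((a / n) ^ 2 * σ ^ 2 / 2) ^ n) := by
          rw [ENNReal.ofReal_pow (Real.exp_pos _).le]
      _ = ENNReal.ofReal (Real.exp (a ^ 2 * σ ^ 2 / (2 * n))) := by
          rw [← Real.exp_nat_mul]
          congr 1
          field_simp
  -- Gaussian representation
  set s : ℝ := Real.sqrt (2 * c) with hs
  have hs2 : s ^ 2 = 2 * c := Real.sq_sqrt (by positivity)
  have hsqrtpos : (0:ℝ) < Real.sqrt (2 * Real.pi) := Real.sqrt_pos.mpr (by positivity)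
  have hgauss : ∀ ω, Real.exp (c * Z ω ^ 2)
      = (Real.sqrt (2 * Real.pi))⁻¹ * ∫ t : ℝ, Real.exp (s * Z ω * t - t ^ 2 / 2) := by
    intro ω
    rw [gauss_mgf_integral (s * Z ω)]
    rw [← mul_assoc, inv_mul_cancel₀ hsqrtpos.ne', one_mul]
    congr 1
    rw [mul_pow, hs2]
    ring
  -- joint measurability for Tonelli
  have hjoint : AEMeasurable (Function.uncurry
      (fun ω t => ENNReal.ofReal (Real.exp (s * Z ω * t - t ^ 2 / 2))))
      (μ.prod (volume : Measure ℝ)) := by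
    apply Measurable.aemeasurable
    apply ENNReal.measurable_ofReal.comp
    apply Real.measurable_exp.comp
    apply Measurable.sub
    · exact ((hZmeas.comp measurable_fst).const_mul s).mul measurable_snd
    · exact (measurable_snd.pow_const 2).div_const 2
  -- main chain
  have hmain : L ≤ ENNReal.ofReal (1 / Real.sqrt (1 - lam)) := by
    calc L = ∫⁻ ω, ENNReal.ofReal ((Real.sqrt (2 * Real.pi))⁻¹ *
            ∫ t : ℝ, Real.exp (s * Z ω * t - t ^ 2 / 2)) ∂μ := by
          rw [hL]
          exact lintegral_congr fun ω => by rw [← hgauss ω]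
      _ = ENNReal.ofReal (Real.sqrt (2 * Real.pi))⁻¹ *
            ∫⁻ ω, ∫⁻ t : ℝ, ENNReal.ofReal (Real.exp (s * Z ω * t - t ^ 2 / 2)) ∂volume ∂μ := by
          simp_rw [ENNReal.ofReal_mul (inv_nonneg.mpr (Real.sqrt_nonneg _)),
            ofReal_integral_eq_lintegral_ofReal (integrable_exp_lin_quad _)
              (Filter.Eventually.of_forall fun t => (Real.exp_pos _).le)]
          rw [lintegral_const_mul' _ _ ENNReal.ofReal_ne_top]
      _ = ENNReal.ofReal (Real.sqrt (2 * Real.pi))⁻¹ *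
            ∫⁻ t : ℝ, ∫⁻ ω, ENNReal.ofReal (Real.exp (s * Z ω * t - t ^ 2 / 2)) ∂μ ∂volume := by
          rw [lintegral_lintegral_swap hjoint]
      _ ≤ ENNReal.ofReal (Real.sqrt (2 * Real.pi))⁻¹ *
            ∫⁻ t : ℝ, ENNReal.ofReal (Real.exp (-((1 - lam) / 2) * t ^ 2)) ∂volume := by
          apply mul_le_mul_right
          apply lintegral_mono
          intro t
          have hsplit : ∀ ω, s * Z ω * t - t ^ 2 / 2 = (s * t) * Z ω + (-(t ^ 2 / 2)) :=
            fun ω => by ring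
          calc ∫⁻ ω, ENNReal.ofReal (Real.exp (s * Z ω * t - t ^ 2 / 2)) ∂μ
              = ENNReal.ofReal (Real.exp (-(t ^ 2 / 2))) *
                ∫⁻ ω, ENNReal.ofReal (Real.exp ((s * t) * Z ω)) ∂μ := by
                simp_rw [hsplit, Real.exp_add,
                  ENNReal.ofReal_mul (Real.exp_pos _).le]
                rw [lintegral_mul_const' _ _ ENNReal.ofReal_ne_top, mul_comm]
            _ ≤ ENNReal.ofReal (Real.exp (-(t ^ 2 / 2))) *
                ENNReal.ofReal (Real.exp ((s * t) ^ 2 * σ ^ 2 / (2 * n))) :=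
                mul_le_mul_right (hH (s * t)) _
            _ = ENNReal.ofReal (Real.exp (-((1 - lam) / 2) * t ^ 2)) := by
                rw [← ENNReal.ofReal_mul (Real.exp_pos _).le, ← Real.exp_add]
                congr 1
                have : (s * t) ^ 2 = 2 * c * t ^ 2 := by rw [mul_pow, hs2]
                rw [this, hc]
                field_simp
                ring
      _ = ENNReal.ofReal (Real.sqrt (2 * Real.pi))⁻¹ *
            ENNReal.ofReal (∫ t : ℝ, Real.exp (-((1 - lam) / 2) * t ^ 2)) := by
          rw [ofReal_integral_eq_lintegral_ofReal
            (integrable_exp_neg_mul_sq (by linarith : (0:ℝ) < (1 - lam) / 2))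
            (Filter.Eventually.of_forall fun t => (Real.exp_pos _).le)]
      _ = ENNReal.ofReal (1 / Real.sqrt (1 - lam)) := by
          rw [integral_gaussian, ← ENNReal.ofReal_mul (inv_nonneg.mpr (Real.sqrt_nonneg _))]
          congr 1
          have h2 : Real.pi / ((1 - lam) / 2) = (2 * Real.pi) / (1 - lam) := by
            rw [div_div_eq_mul_div]; ring
          rw [h2, Real.sqrt_div (by positivity : (0:ℝ) ≤ 2 * Real.pi)]
          rw [one_div, div_eq_mul_inv, ← mul_assoc, inv_mul_cancel₀ hsqrtpos.ne', one_mul]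
  calc L.toReal ≤ (ENNReal.ofReal (1 / Real.sqrt (1 - lam))).toReal :=
        ENNReal.toReal_mono ENNReal.ofReal_ne_top hmain
    _ = 1 / Real.sqrt (1 - lam) := ENNReal.toReal_ofReal hRHSpos.le
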